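/- Let φ₁, …, φ_k (k ≥ 1) be reduction functions on D such that each φ_i is idempotent (φ_i ∘ φ_i = φ_i) and, for all i > j, φ_i semi-commutes with φ_j, i.e., φ_j(φ_i(x)) ≤ φ_i(φ_j(x)) for all x ∈ D. Then the sequence composition x ↦ φ₁(φ₂(⋯φ_k(x)⋯)) is idempotent. -/

import Mathlib

/-- Sequence composition `x ↦ f₁(f₂(⋯f_k(x)⋯))` of a family of functions. -/
def seqComp {D : Type*} {k : ℕ} (f : Fin k → D → D) : D → D :=
  (List.ofFn f).foldr (· ∘ ·) id

private lemma fix_fold {D : Type*} [PartialOrder D] (l : List (D → D))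
    (hc : ∀ f ∈ l, ∀ x : D, f x ≤ x)
    (hi : ∀ f ∈ l, f ∘ f = f)
    (hp : List.Pairwise (fun f g => ∀ x : D, f (g x) ≤ g (f x)) l) :
    ∀ f ∈ l, ∀ x : D, f (l.foldr (· ∘ ·) id x) = l.foldr (· ∘ ·) id x := by
  induction l with
  | nil => simp
  | cons f t ih =>
    intro g hg x
    simp only [List.foldr_cons, Function.comp_apply]
    rcases List.mem_cons.mp hg with rfl | hg
    · exact congrFun (hi g (List.mem_cons_self)) _
    · have hp' := List.pairwise_cons.mp hp
      have ihg := ih (fun f hf => hc f (List.mem_cons_of_mem _ hf))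
        (fun f hf => hi f (List.mem_cons_of_mem _ hf)) hp'.2 g hg x
      refine le_antisymm (hc g (List.mem_cons_of_mem _ hg) _) ?_
      calc f (t.foldr (· ∘ ·) id x) = f (g (t.foldr (· ∘ ·) id x)) := by rw [ihg]
        _ ≤ g (f (t.foldr (· ∘ ·) id x)) := hp'.1 g hg _

private lemma fold_fix {D : Type*} (l : List (D → D)) (y : D)
    (h : ∀ f ∈ l, f y = y) : l.foldr (· ∘ ·) id y = y := by
  induction l with
  | nil => rfl
  | cons f t ih =>
    simp only [List.foldr_cons, Function.comp_apply]
    rw [ih (fun f hf => h f (List.mem_cons_of_mem _ hf)), h f (List.mem_cons_self)]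

/-- if the reduction functions `φ₁, …, φ_k` are idempotent and
`φ_i` semi-commutes with `φ_j` for `i > j` (i.e., `φ_j (φ_i x) ≤ φ_i (φ_j x)`),
then their sequence composition is idempotent. -/
theorem seqComp_idempotent_of_semiCommute {D : Type*} [PartialOrder D]
    {k : ℕ} (hk : 0 < k) (φ : Fin k → D → D)
    (hcontr : ∀ i, ∀ x : D, φ i x ≤ x)
    (hmono : ∀ i, Monotone (φ i))
    (hidem : ∀ i, φ i ∘ φ i = φ i)
    (hsemi : ∀ i j : Fin k, j < i → ∀ x : D, φ j (φ i x) ≤ φ i (φ j x)) :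
    ∀ x : D, seqComp φ (seqComp φ x) = seqComp φ x := by
  intro x
  have hc : ∀ f ∈ List.ofFn φ, ∀ y : D, f y ≤ y := by
    intro f hf; obtain ⟨i, rfl⟩ := (List.mem_ofFn.mp hf); exact hcontr i
  have hi : ∀ f ∈ List.ofFn φ, f ∘ f = f := by
    intro f hf; obtain ⟨i, rfl⟩ := (List.mem_ofFn.mp hf); exact hidem i
  have hp : List.Pairwise (fun f g => ∀ y : D, f (g y) ≤ g (f y)) (List.ofFn φ) := by
    rw [List.pairwise_ofFn]
    intro i j hij y
    exact hsemi j i hij y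
  have key := fix_fold (List.ofFn φ) hc hi hp
  exact fold_fix _ _ (fun f hf => key f hf x)
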